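/- Let θ : ℕ → ℝ be positive and nondecreasing with n²/θ_n → c as n → ∞ for some constant c ≥ 0. Then θ_n^n/(θ_n)_n = ∏_{j=0}^{n−1} θ_n/(θ_n+j) → e^{−c/2} as n → ∞. In particular, under the Ewens sampling formula with parameter θ_n, the probability P(C_1^n = n) = θ_n^n/(θ_n)_n that all n sampled individuals carry distinct alleles converges to e^{−c/2}. -/

import Mathlib

open Filter

lemma log_bounds (a x : ℝ) (ha : 0 < a) (hx : 0 ≤ x) :
    -(x/a) ≤ Real.log (a/(a+x)) ∧ Real.log (a/(a+x)) ≤ -(x/a) + (x/a)^2 := by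
  have hax : 0 < a + x := by linarith
  have hlogeq : Real.log (a/(a+x)) = -(Real.log ((a+x)/a)) := by
    rw [Real.log_div ha.ne' hax.ne', Real.log_div hax.ne' ha.ne']; ring
  constructor
  · rw [hlogeq]
    have h1 := Real.log_le_sub_one_of_pos (div_pos hax ha)
    have h2 : (a+x)/a - 1 = x/a := by field_simp; ring
    linarith
  · have h1 := Real.log_le_sub_one_of_pos (div_pos ha hax)
    have h2 : a/(a+x) - 1 ≤ -(x/a) + (x/a)^2 := by
      rw [div_sub_one hax.ne']
      have h3 : -(x/a) + (x/a)^2 = (x^2 - x*a)/a^2 := by field_simp; ring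
      rw [h3, div_le_div_iff₀ hax (by positivity)]
      nlinarith [pow_nonneg hx 3, mul_nonneg (mul_nonneg hx hx) hx]
    linarith

theorem stmt_16 (θ : ℕ → ℝ) (hpos : ∀ n, 0 < θ n) (hmono : Monotone θ)
    (c : ℝ) (hc : 0 ≤ c)
    (hC2 : Tendsto (fun n : ℕ => (n : ℝ) ^ 2 / θ n) atTop (nhds c)) :
    Tendsto (fun n : ℕ => ∏ j ∈ Finset.range n, θ n / (θ n + j))
      atTop (nhds (Real.exp (-c / 2))) := by
  have gauss : ∀ n : ℕ, (∑ j ∈ Finset.range n, (j:ℝ)) = n*(n-1)/2 := by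
    intro n; induction n with
    | zero => simp
    | succ k ih => rw [Finset.sum_range_succ, ih]; push_cast; ring
  -- limits
  have hinv : Tendsto (fun n : ℕ => 1/(n:ℝ)) atTop (nhds 0) :=
    tendsto_one_div_atTop_nhds_zero_nat
  have hB : Tendsto (fun n : ℕ => (n:ℝ)/θ n) atTop (nhds 0) := by
    have h := hC2.mul hinv
    rw [mul_zero] at h
    refine h.congr' ?_
    filter_upwards [eventually_ge_atTop 1] with n hn
    have hn' : (n:ℝ) ≠ 0 := by positivity
    field_simp
  have hD : Tendsto (fun n : ℕ => (n:ℝ)^3/(θ n)^2) atTop (nhds 0) := by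
    have h := (hC2.mul hC2).mul hinv
    rw [mul_zero] at h
    refine h.congr' ?_
    filter_upwards [eventually_ge_atTop 1] with n hn
    have hn' : (n:ℝ) ≠ 0 := by positivity
    have hθ' := (hpos n).ne'
    field_simp
  have hL : Tendsto (fun n : ℕ => -(((n:ℝ)^2 - n)/(2*θ n))) atTop (nhds (-c/2)) := by
    have h : Tendsto (fun n : ℕ => -(((n:ℝ)^2/θ n - n/θ n)/2)) atTop (nhds (-((c-0)/2))) :=
      ((hC2.sub hB).div_const 2).neg
    rw [show -((c-0)/2) = -c/2 by ring] at h
    refine h.congr fun n => ?_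
    rw [div_sub_div_same, div_div, mul_comm (θ n) 2]
  have hU : Tendsto (fun n : ℕ => -(((n:ℝ)^2 - n)/(2*θ n)) + (n:ℝ)^3/(θ n)^2)
      atTop (nhds (-c/2)) := by
    have := hL.add hD
    rwa [add_zero] at this
  -- the sum of logs
  have hsumlog : Tendsto (fun n : ℕ => ∑ j ∈ Finset.range n, Real.log (θ n / (θ n + j)))
      atTop (nhds (-c/2)) := by
    refine tendsto_of_tendsto_of_tendsto_of_le_of_le hL hU ?_ ?_
    · intro n
      have hlb : ∀ j ∈ Finset.range n, -((j:ℝ)/θ n) ≤ Real.log (θ n / (θ n + j)) :=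
        fun j _ => (log_bounds (θ n) j (hpos n) (Nat.cast_nonneg j)).1
      calc -(((n:ℝ)^2 - n)/(2*θ n)) = ∑ j ∈ Finset.range n, -((j:ℝ)/θ n) := by
            rw [Finset.sum_neg_distrib, ← Finset.sum_div, gauss n]; ring
        _ ≤ _ := Finset.sum_le_sum hlb
    · intro n
      have hub : ∀ j ∈ Finset.range n,
          Real.log (θ n / (θ n + j)) ≤ -((j:ℝ)/θ n) + ((j:ℝ)/θ n)^2 :=
        fun j _ => (log_bounds (θ n) j (hpos n) (Nat.cast_nonneg j)).2
      calc (∑ j ∈ Finset.range n, Real.log (θ n / (θ n + j)))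
          ≤ ∑ j ∈ Finset.range n, (-((j:ℝ)/θ n) + ((j:ℝ)/θ n)^2) :=
            Finset.sum_le_sum hub
        _ ≤ ∑ j ∈ Finset.range n, (-((j:ℝ)/θ n) + (n:ℝ)^2/(θ n)^2) := by
            refine Finset.sum_le_sum fun j hj => ?_
            have hj' : (j:ℝ) ≤ n := Nat.cast_le.mpr (Finset.mem_range.mp hj).le
            have h1 : ((j:ℝ)/θ n)^2 ≤ (n:ℝ)^2/(θ n)^2 := by
              rw [div_pow]
              exact div_le_div_of_nonneg_right (by nlinarith [Nat.cast_nonneg (α := ℝ) j]) (by positivity)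
            linarith
        _ = -(((n:ℝ)^2 - n)/(2*θ n)) + (n:ℝ)^3/(θ n)^2 := by
            rw [Finset.sum_add_distrib, Finset.sum_neg_distrib, ← Finset.sum_div, gauss n,
              Finset.sum_const, Finset.card_range, nsmul_eq_mul]
            ring
  -- conclude
  have h := (Real.continuous_exp.tendsto _).comp hsumlog
  refine h.congr fun n => ?_
  simp only [Function.comp_apply]
  rw [Real.exp_sum]
  refine Finset.prod_congr rfl fun j hj => ?_
  have := hpos n
  have hden : 0 < θ n + j := by positivity
  rw [Real.exp_log (by positivity)]
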